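/- For θ ≠ 0, the second derivative of log((e^θ−1)/θ) equals (e^{2θ} − e^θ(θ²+2) + 1)/((e^θ−1)²θ²), and this quantity is strictly positive. -/

import Mathlib

open Real

lemma exp_sub_one_ne_zero' {t : ℝ} (ht : t ≠ 0) : Real.exp t - 1 ≠ 0 := by
  intro h
  have : Real.exp t = Real.exp 0 := by rw [Real.exp_zero]; linarith
  exact ht (Real.exp_injective this)

lemma nhds_ne_zero {θ : ℝ} (hθ : θ ≠ 0) : {t : ℝ | t ≠ 0} ∈ nhds θ :=
  isOpen_ne.mem_nhds hθ

lemma hasDerivAt_log_mgf {t : ℝ} (ht : t ≠ 0) :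
    HasDerivAt (fun t : ℝ => Real.log ((Real.exp t - 1) / t))
      (Real.exp t / (Real.exp t - 1) - 1 / t) t := by
  have hne := exp_sub_one_ne_zero' ht
  have h1 : HasDerivAt (fun s : ℝ => Real.log (Real.exp s - 1))
      ((Real.exp t - 1)⁻¹ * Real.exp t) t :=
    by have := (Real.hasDerivAt_log hne).comp t ((Real.hasDerivAt_exp t).sub_const 1); exact this
  have h2 : HasDerivAt Real.log t⁻¹ t := Real.hasDerivAt_log ht
  have h3 : HasDerivAt (fun s : ℝ => Real.log (Real.exp s - 1) - Real.log s)
      ((Real.exp t - 1)⁻¹ * Real.exp t - t⁻¹) t := h1.sub h2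
  have heq : (fun s : ℝ => Real.log ((Real.exp s - 1) / s)) =ᶠ[nhds t]
      (fun s : ℝ => Real.log (Real.exp s - 1) - Real.log s) := by
    filter_upwards [nhds_ne_zero ht] with s hs
    exact Real.log_div (exp_sub_one_ne_zero' hs) hs
  have := h3.congr_of_eventuallyEq heq
  convert this using 1
  · rfl
  · rfl
  field_simp

/-- For `θ ≠ 0`, the second derivative of `log((e^θ-1)/θ)` equals
`(e^{2θ} - e^θ(θ²+2) + 1)/((e^θ-1)²θ²)`, and this quantity is strictly positive. -/
theorem second_deriv_log_mgf_uniform (θ : ℝ) (hθ : θ ≠ 0) :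
    HasDerivAt (deriv fun t : ℝ => Real.log ((Real.exp t - 1) / t))
      ((Real.exp (2 * θ) - Real.exp θ * (θ ^ 2 + 2) + 1) /
        ((Real.exp θ - 1) ^ 2 * θ ^ 2)) θ ∧
    0 < (Real.exp (2 * θ) - Real.exp θ * (θ ^ 2 + 2) + 1) /
        ((Real.exp θ - 1) ^ 2 * θ ^ 2) := by
  have hne := exp_sub_one_ne_zero' hθ
  have hd2 : 0 < (Real.exp θ - 1) ^ 2 * θ ^ 2 :=
    mul_pos (pow_two_pos_of_ne_zero hne) (pow_two_pos_of_ne_zero hθ)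
  constructor
  · -- second derivative
    have h1 : HasDerivAt (fun t : ℝ => Real.exp t / (Real.exp t - 1))
        ((Real.exp θ * (Real.exp θ - 1) - Real.exp θ * Real.exp θ) /
          (Real.exp θ - 1) ^ 2) θ :=
      (Real.hasDerivAt_exp θ).div ((Real.hasDerivAt_exp θ).sub_const 1) hne
    have h2 : HasDerivAt (fun t : ℝ => 1 / t) (-(θ ^ 2)⁻¹) θ := by
      simpa [one_div] using hasDerivAt_inv hθ
    have h3 := h1.sub h2
    have heq : (deriv fun t : ℝ => Real.log ((Real.exp t - 1) / t)) =ᶠ[nhds θ]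
        (fun t : ℝ => Real.exp t / (Real.exp t - 1) - 1 / t) := by
      filter_upwards [nhds_ne_zero hθ] with s hs
      exact (hasDerivAt_log_mgf hs).deriv
    have := h3.congr_of_eventuallyEq heq
    convert this using 1
    · rfl
    · rfl
    have h2θ : Real.exp (2 * θ) = Real.exp θ ^ 2 := by
      rw [two_mul, Real.exp_add]; ring
    rw [h2θ]
    field_simp
    ring
  · -- positivity
    apply div_pos _ hd2
    have hkey : Real.exp (2 * θ) - Real.exp θ * (θ ^ 2 + 2) + 1 =
        Real.exp θ * ((2 * Real.sinh (θ / 2)) ^ 2 - θ ^ 2) := by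
      rw [Real.sinh_eq]
      have h2θ : Real.exp (2 * θ) = Real.exp θ ^ 2 := by
        rw [two_mul, Real.exp_add]; ring
      have hh : Real.exp θ = Real.exp (θ / 2) ^ 2 := by
        rw [sq, ← Real.exp_add]; norm_num
      have hneg : Real.exp (-(θ / 2)) = (Real.exp (θ / 2))⁻¹ := Real.exp_neg _
      rw [h2θ, hneg, hh]
      have hpos : Real.exp (θ / 2) ≠ 0 := (Real.exp_pos _).ne'
      field_simp
      ring
    rw [hkey]
    apply mul_pos (Real.exp_pos θ)
    have hx : θ / 2 ≠ 0 := by simpa using hθ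
    rcases lt_or_gt_of_ne hx with h | h
    · have := (Real.self_lt_sinh_iff (x := -(θ / 2))).mpr (by linarith)
      rw [Real.sinh_neg] at this
      nlinarith
    · have := Real.self_lt_sinh_iff.mpr h
      nlinarith
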